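/- Let q = 2^m with m ≥ 2. For each b ∈ T₀* = {x ∈ F_q^* : Tr(x) = 0}, define for a ∈ T₀* the quantity p(a,b) = Σ_{τ : τ²+τ = b} (1 - (-1)^{Tr(a/τ)}). Then Σ_{a ∈ T₀*} p(a,b) = q. -/

import Mathlib

open Finset

section Aux

variable {F : Type*} [Field F] [Fintype F] [DecidableEq F] [Algebra (ZMod 2) F]

private lemma my_charF : CharP F 2 :=
  charP_of_injective_algebraMap (algebraMap (ZMod 2) F).injective 2

private lemma my_two_eq_zero : (2 : F) = 0 := by
  haveI := (my_charF (F := F))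
  exact CharTwo.two_eq_zero

private lemma my_trace_sq (x : F) :
    Algebra.trace (ZMod 2) F (x ^ 2) = Algebra.trace (ZMod 2) F x := by
  haveI : CharP F 2 := my_charF
  haveI : Fact (Nat.Prime 2) := ⟨Nat.prime_two⟩
  let e : F ≃ₐ[ZMod 2] F := AlgEquiv.ofRingEquiv (f := frobeniusEquiv F 2) (by
    intro r
    show frobenius F 2 _ = _
    rw [frobenius_def]
    rw [← map_pow, ZMod.pow_card])
  have := Algebra.trace_eq_of_algEquiv e x
  simpa [e, AlgEquiv.ofRingEquiv, frobeniusEquiv_def, frobenius_def] using this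

private lemma my_exists_trace_one : ∃ w : F, Algebra.trace (ZMod 2) F w = 1 := by
  have : FiniteDimensional (ZMod 2) F := Module.finite_iff_finite.mpr inferInstance
  exact Algebra.trace_surjective (ZMod 2) F 1

private lemma zmod2_cases (x : ZMod 2) : x = 0 ∨ x = 1 := by revert x; decide

private lemma zmod2_ne_zero (x : ZMod 2) : ¬ x = 0 ↔ x = 1 := by revert x; decide

/-- The number of `a` with `Tr a = 0` is `2^(m-1)`. -/
private lemma card_trace_zero (m : ℕ) (hm : 1 ≤ m) (hcard : Fintype.card F = 2 ^ m) :
    (univ.filter (fun a : F => Algebra.trace (ZMod 2) F a = 0)).card = 2 ^ (m - 1) := by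
  set Tr := Algebra.trace (ZMod 2) F with hTr
  obtain ⟨w, hw⟩ := my_exists_trace_one (F := F)
  have htwoF : (2 : F) = 0 := my_two_eq_zero
  have hww : w + w = 0 := by linear_combination w * htwoF
  have hbij : (univ.filter (fun a : F => Tr a = 0)).card
      = (univ.filter (fun a : F => Tr a = 1)).card := by
    refine Finset.card_nbij' (fun a => a + w) (fun a => a + w) ?_ ?_ ?_ ?_
    · intro a ha
      simp only [mem_coe, mem_filter, mem_univ, true_and] at ha ⊢
      rw [map_add, ha, hw, zero_add]
    · intro a ha
      simp only [mem_coe, mem_filter, mem_univ, true_and] at ha ⊢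
      rw [map_add, ha, hw]; decide
    · intro a _; simp only; rw [add_assoc, hww, add_zero]
    · intro a _; simp only; rw [add_assoc, hww, add_zero]
  have hsplit : (univ.filter (fun a : F => Tr a = 0)).card
      + (univ.filter (fun a : F => Tr a = 1)).card = 2 ^ m := by
    rw [← hcard, ← Finset.card_univ,
      ← Finset.card_filter_add_card_filter_not (s := (univ : Finset F))
        (p := fun a : F => Tr a = 0)]
    congr 2
    apply Finset.filter_congr
    intro a _
    simp [zmod2_ne_zero (Tr a)]
  have hpow : 2 ^ m = 2 * 2 ^ (m - 1) := by
    rw [← pow_succ']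
    congr 1
    omega
  omega

/-- For `c ∉ {0,1}` there is `u` with `Tr u = 0` and `Tr (u*c) = 1`. -/
private lemma exists_good_u (c : F) (hc0 : c ≠ 0) (hc1 : c ≠ 1) :
    ∃ u : F, Algebra.trace (ZMod 2) F u = 0 ∧ Algebra.trace (ZMod 2) F (u * c) = 1 := by
  set Tr := Algebra.trace (ZMod 2) F with hTr
  obtain ⟨w, hw⟩ := my_exists_trace_one (F := F)
  have htwoF : (2 : F) = 0 := my_two_eq_zero
  have hc1' : (1 : F) + c ≠ 0 := by
    intro h
    exact hc1 (by linear_combination h - htwoF)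
  have hu1 : Tr (w * c⁻¹ * c) = 1 := by
    rw [mul_assoc, inv_mul_cancel₀ hc0, mul_one, hw]
  have hv1 : Tr (w * (1 + c)⁻¹) + Tr (w * (1 + c)⁻¹ * c) = 1 := by
    have : Tr (w * (1 + c)⁻¹ * (1 + c)) = 1 := by
      rw [mul_assoc, inv_mul_cancel₀ hc1', mul_one, hw]
    rw [← this, mul_add, mul_one, map_add]
  set u1 := w * c⁻¹ with hu1def
  set v1 := w * (1 + c)⁻¹ with hv1def
  rcases zmod2_cases (Tr u1) with h1 | h1
  · exact ⟨u1, h1, hu1⟩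
  · rcases zmod2_cases (Tr v1) with h2 | h2
    · refine ⟨v1, h2, ?_⟩
      rw [h2, zero_add] at hv1
      exact hv1
    · refine ⟨u1 + v1, ?_, ?_⟩
      · rw [map_add, h1, h2]; decide
      · rw [h2] at hv1
        have h3 : Tr (v1 * c) = 0 := by
          rcases zmod2_cases (Tr (v1 * c)) with h | h
          · exact h
          · rw [h] at hv1; exact absurd hv1 (by decide)
        rw [add_mul, map_add, hu1, h3, add_zero]

/-- The number of `a` with `Tr a = 0` and `Tr (a*c) = 1` is `2^(m-2)`, for `c ∉ {0,1}`. -/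
private lemma card_pair (m : ℕ) (hm : 2 ≤ m) (hcard : Fintype.card F = 2 ^ m)
    (c : F) (hc0 : c ≠ 0) (hc1 : c ≠ 1) :
    (univ.filter (fun a : F =>
        Algebra.trace (ZMod 2) F a = 0 ∧ Algebra.trace (ZMod 2) F (a * c) = 1)).card
      = 2 ^ (m - 2) := by
  set Tr := Algebra.trace (ZMod 2) F with hTr
  obtain ⟨u, hu0, hu1⟩ := exists_good_u c hc0 hc1
  have htwoF : (2 : F) = 0 := my_two_eq_zero
  have huu : u + u = 0 := by linear_combination u * htwoF
  have hbij : (univ.filter (fun a : F => Tr a = 0 ∧ Tr (a * c) = 0)).card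
      = (univ.filter (fun a : F => Tr a = 0 ∧ Tr (a * c) = 1)).card := by
    refine Finset.card_nbij' (fun a => a + u) (fun a => a + u) ?_ ?_ ?_ ?_
    · intro a ha
      simp only [mem_coe, mem_filter, mem_univ, true_and] at ha ⊢
      constructor
      · rw [map_add, ha.1, hu0, add_zero]
      · rw [add_mul, map_add, ha.2, hu1, zero_add]
    · intro a ha
      simp only [mem_coe, mem_filter, mem_univ, true_and] at ha ⊢
      constructor
      · rw [map_add, ha.1, hu0, add_zero]
      · rw [add_mul, map_add, ha.2, hu1]; decide
    · intro a _; simp only; rw [add_assoc, huu, add_zero]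
    · intro a _; simp only; rw [add_assoc, huu, add_zero]
  have hsplit : (univ.filter (fun a : F => Tr a = 0 ∧ Tr (a * c) = 0)).card
      + (univ.filter (fun a : F => Tr a = 0 ∧ Tr (a * c) = 1)).card = 2 ^ (m - 1) := by
    rw [← card_trace_zero m (by omega) hcard,
      ← Finset.card_filter_add_card_filter_not
        (s := univ.filter (fun a : F => Tr a = 0)) (p := fun a : F => Tr (a * c) = 0)]
    rw [Finset.filter_filter, Finset.filter_filter]
    congr 2
    apply Finset.filter_congr
    intro a _
    simp [zmod2_ne_zero (Tr (a * c))]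
  have hpow : 2 ^ (m - 1) = 2 * 2 ^ (m - 2) := by
    rw [← pow_succ']
    congr 1
    omega
  omega

/-- The fiber of `t ↦ t^2 + t` over `t^2 + t` is `{t, t+1}`. -/
private lemma fiber_eq (t : F) :
    univ.filter (fun u : F => u ^ 2 + u = t ^ 2 + t) = {t, t + 1} := by
  have htwoF : (2 : F) = 0 := my_two_eq_zero
  ext u
  simp only [mem_filter, mem_univ, true_and, mem_insert, mem_singleton]
  constructor
  · intro h
    have hfac : (u + t) * (u + t + 1) = 0 := by
      linear_combination h + (t ^ 2 + u * t + t) * htwoF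
    rcases mul_eq_zero.mp hfac with h' | h'
    · left; linear_combination h' - t * htwoF
    · right; linear_combination h' - (t + 1) * htwoF
  · rintro (rfl | rfl)
    · rfl
    · linear_combination (t + 1) * htwoF

private lemma self_ne_add_one (t : F) : t ≠ t + 1 := by
  intro h
  have : (1 : F) = 0 := by linear_combination -h
  exact one_ne_zero this

/-- Existence of a root of `τ^2 + τ = b` when `Tr b = 0`. -/
private lemma exists_root (m : ℕ) (hm : 1 ≤ m) (hcard : Fintype.card F = 2 ^ m)
    (b : F) (hbt : Algebra.trace (ZMod 2) F b = 0) :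
    ∃ t : F, t ^ 2 + t = b := by
  set Tr := Algebra.trace (ZMod 2) F with hTr
  set S := univ.image (fun t : F => t ^ 2 + t) with hS
  set T0 := univ.filter (fun a : F => Tr a = 0) with hT0
  have hsub : S ⊆ T0 := by
    intro y hy
    obtain ⟨t, _, rfl⟩ := Finset.mem_image.mp hy
    simp only [hT0, mem_filter, mem_univ, true_and]
    rw [map_add, my_trace_sq]
    rcases zmod2_cases (Tr t) with h | h <;> rw [h] <;> decide
  have hcount : (2 : ℕ) ^ m = S.card * 2 := by
    rw [← hcard, ← Finset.card_univ,
      Finset.card_eq_sum_card_fiberwise (f := fun t : F => t ^ 2 + t) (t := S)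
        (fun x _ => Finset.mem_image_of_mem _ (mem_univ x))]
    rw [Finset.sum_congr rfl (fun y hy => ?_), Finset.sum_const, smul_eq_mul]
    obtain ⟨t, _, rfl⟩ := Finset.mem_image.mp hy
    rw [fiber_eq t]
    rw [Finset.card_insert_of_notMem (by simp [self_ne_add_one t]), Finset.card_singleton]
  have hT0card : T0.card = 2 ^ (m - 1) := card_trace_zero m hm hcard
  have hScard : S.card = 2 ^ (m - 1) := by
    have : 2 ^ m = 2 ^ (m - 1) * 2 := by
      rw [← pow_succ]; congr 1; omega
    omega
  have heq : S = T0 := Finset.eq_of_subset_of_card_le hsub (by omega)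
  have hbmem : b ∈ S := by
    rw [heq]
    simp only [hT0, mem_filter, mem_univ, true_and]
    exact hbt
  obtain ⟨t, _, ht⟩ := Finset.mem_image.mp hbmem
  exact ⟨t, ht⟩

end Aux

/-- For `q = 2^m`, `m ≥ 2`, and `b ∈ T₀*`, with
`p(a,b) = Σ_{τ : τ²+τ=b} (1 - (-1)^{Tr(a/τ)})`, one has `Σ_{a ∈ T₀*} p(a,b) = q`. -/
theorem sum_p_ab_eq_q (m : ℕ) (hm : 2 ≤ m)
    (F : Type*) [Field F] [Fintype F] [DecidableEq F] [Algebra (ZMod 2) F]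
    (hcard : Fintype.card F = 2 ^ m) (b : F) (hb0 : b ≠ 0)
    (hbt : Algebra.trace (ZMod 2) F b = 0) :
    ∑ a ∈ Finset.univ.filter (fun a : F => a ≠ 0 ∧ Algebra.trace (ZMod 2) F a = 0),
      ∑ τ ∈ Finset.univ.filter (fun τ : F => τ ^ 2 + τ = b),
        (1 - (if Algebra.trace (ZMod 2) F (a / τ) = 0 then (1 : ℤ) else -1)) = 2 ^ m := by
  set Tr := Algebra.trace (ZMod 2) F with hTr
  have htwoF : (2 : F) = 0 := my_two_eq_zero
  obtain ⟨t, ht⟩ := exists_root m (by omega) hcard b hbt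
  have hfilter : Finset.univ.filter (fun τ : F => τ ^ 2 + τ = b) = {t, t + 1} := by
    rw [← ht]; exact fiber_eq t
  -- each root is ≠ 0 and ≠ 1
  have hroot : ∀ τ : F, τ ^ 2 + τ = b → τ ≠ 0 ∧ τ ≠ 1 := by
    intro τ hτ
    constructor
    · rintro rfl; apply hb0; linear_combination -hτ
    · rintro rfl; apply hb0; linear_combination htwoF - hτ
  -- inner sum (over a) for a fixed root τ
  have hinner : ∀ τ : F, τ ^ 2 + τ = b →
      ∑ a ∈ Finset.univ.filter (fun a : F => a ≠ 0 ∧ Tr a = 0),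
        (1 - (if Tr (a / τ) = 0 then (1 : ℤ) else -1)) = 2 ^ (m - 1) := by
    intro τ hτ
    obtain ⟨hτ0, hτ1⟩ := hroot τ hτ
    have hstep : ∑ a ∈ Finset.univ.filter (fun a : F => a ≠ 0 ∧ Tr a = 0),
        (1 - (if Tr (a / τ) = 0 then (1 : ℤ) else -1))
        = ∑ a ∈ Finset.univ.filter (fun a : F => a ≠ 0 ∧ Tr a = 0),
          (if Tr (a / τ) = 0 then (0 : ℤ) else 2) := by
      apply Finset.sum_congr rfl
      intro a _
      split_ifs <;> ring
    rw [hstep, Finset.sum_ite, Finset.sum_const_zero, zero_add, Finset.sum_const,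
      Finset.filter_filter]
    have hsetre : Finset.univ.filter (fun a : F => (a ≠ 0 ∧ Tr a = 0) ∧ ¬Tr (a / τ) = 0)
        = Finset.univ.filter (fun a : F => Tr a = 0 ∧ Tr (a * τ⁻¹) = 1) := by
      ext a
      simp only [mem_filter, mem_univ, true_and]
      rw [div_eq_mul_inv, zmod2_ne_zero (Tr (a * τ⁻¹))]
      constructor
      · rintro ⟨⟨_, h0⟩, h1⟩; exact ⟨h0, h1⟩
      · rintro ⟨h0, h1⟩
        refine ⟨⟨?_, h0⟩, h1⟩
        rintro rfl
        rw [zero_mul, map_zero] at h1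
        exact absurd h1 (by decide)
    rw [hsetre, card_pair m hm hcard τ⁻¹ (inv_ne_zero hτ0) (fun h => hτ1 (inv_eq_one.mp h))]
    rw [nsmul_eq_mul]
    push_cast
    rw [mul_comm, ← pow_succ']
    congr 1
    omega
  rw [Finset.sum_comm, hfilter]
  have htne : t ∉ ({t + 1} : Finset F) := by simp [self_ne_add_one t]
  rw [Finset.sum_insert htne, Finset.sum_singleton]
  rw [hinner t ht, hinner (t + 1) (by linear_combination ht + (t + 1) * htwoF)]
  rw [← two_mul, ← pow_succ']
  congr 1
  omega
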